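/- Let H be a real Hilbert space and A : H → H a continuous self-adjoint linear operator that is positive (⟪x, A x⟫ ≥ 0 for all x) and invertible with continuous inverse A⁻¹. If Φ : ℝ → H is twice differentiable with Φ''(t) = −A(Φ(t)) for all t, then the quantity t ↦ ‖Φ(t)‖² + ⟪Φ'(t), A⁻¹(Φ'(t))⟫ is constant in t; consequently ‖Φ(t)‖² ≤ ‖Φ(0)‖² + ⟪Φ'(0), A⁻¹(Φ'(0))⟫ for all t ∈ ℝ. -/
import Mathlib


open scoped InnerProductSpace

/-- For the abstract wave equation `Φ'' = -A Φ` with `A` a continuous, self-adjoint,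
positive, boundedly invertible operator on a real Hilbert space, the quantity
`t ↦ ‖Φ(t)‖² + ⟪Φ'(t), A⁻¹(Φ'(t))⟫` is conserved; consequently
`‖Φ(t)‖² ≤ ‖Φ(0)‖² + ⟪Φ'(0), A⁻¹(Φ'(0))⟫` for all `t`. -/
theorem stmt_1 {H : Type*} [NormedAddCommGroup H] [InnerProductSpace ℝ H] [CompleteSpace H]
    (A B : H →L[ℝ] H) (hA : ∀ x y : H, ⟪A x, y⟫_ℝ = ⟪x, A y⟫_ℝ)
    (hpos : ∀ x : H, 0 ≤ ⟪x, A x⟫_ℝ)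
    (hBA : ∀ x : H, B (A x) = x) (hAB : ∀ x : H, A (B x) = x)
    (Φ Φ' Φ'' : ℝ → H)
    (hΦ : ∀ t, HasDerivAt Φ (Φ' t) t)
    (hΦ' : ∀ t, HasDerivAt Φ' (Φ'' t) t)
    (hwave : ∀ t, Φ'' t = -(A (Φ t))) :
    (∀ t s : ℝ, ‖Φ t‖ ^ 2 + ⟪Φ' t, B (Φ' t)⟫_ℝ = ‖Φ s‖ ^ 2 + ⟪Φ' s, B (Φ' s)⟫_ℝ) ∧
      (∀ t : ℝ, ‖Φ t‖ ^ 2 ≤ ‖Φ 0‖ ^ 2 + ⟪Φ' 0, B (Φ' 0)⟫_ℝ) := by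
  -- B is self-adjoint
  have hB : ∀ x y : H, ⟪B x, y⟫_ℝ = ⟪x, B y⟫_ℝ := by
    intro x y
    calc ⟪B x, y⟫_ℝ = ⟪B x, A (B y)⟫_ℝ := by rw [hAB]
    _ = ⟪A (B x), B y⟫_ℝ := (hA _ _).symm
    _ = ⟪x, B y⟫_ℝ := by rw [hAB]
  -- B is positive
  have hBpos : ∀ x : H, 0 ≤ ⟪x, B x⟫_ℝ := by
    intro x
    calc (0:ℝ) ≤ ⟪B x, A (B x)⟫_ℝ := hpos _
    _ = ⟪A (B x), B x⟫_ℝ := real_inner_comm _ _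
    _ = ⟪x, B x⟫_ℝ := by rw [hAB]
  set E : ℝ → ℝ := fun t => ‖Φ t‖ ^ 2 + ⟪Φ' t, B (Φ' t)⟫_ℝ with hE
  have hEderiv : ∀ t, HasDerivAt E 0 t := by
    intro t
    have h1 : HasDerivAt (fun t => ⟪Φ t, Φ t⟫_ℝ) (⟪Φ t, Φ' t⟫_ℝ + ⟪Φ' t, Φ t⟫_ℝ) t :=
      (hΦ t).inner ℝ (hΦ t)
    have hBd : HasDerivAt (fun t => B (Φ' t)) (B (Φ'' t)) t := (B.hasFDerivAt.comp_hasDerivAt t (hΦ' t))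
    have h2 : HasDerivAt (fun t => ⟪Φ' t, B (Φ' t)⟫_ℝ)
        (⟪Φ' t, B (Φ'' t)⟫_ℝ + ⟪Φ'' t, B (Φ' t)⟫_ℝ) t := (hΦ' t).inner ℝ hBd
    have key : (⟪Φ t, Φ' t⟫_ℝ + ⟪Φ' t, Φ t⟫_ℝ) + (⟪Φ' t, B (Φ'' t)⟫_ℝ + ⟪Φ'' t, B (Φ' t)⟫_ℝ) = 0 := by
      rw [hwave t]
      have e1 : ⟪-(A (Φ t)), B (Φ' t)⟫_ℝ = -⟪Φ t, Φ' t⟫_ℝ := by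
        rw [inner_neg_left, hA, hAB]
      have e2 : ⟪Φ' t, B (-(A (Φ t)))⟫_ℝ = -⟪Φ' t, Φ t⟫_ℝ := by
        rw [map_neg, inner_neg_right, hBA]
      rw [e1, e2]; ring
    have := h1.add h2
    rw [key] at this
    have heq : E = fun t => ⟪Φ t, Φ t⟫_ℝ + ⟪Φ' t, B (Φ' t)⟫_ℝ := by
      funext s; simp [hE, real_inner_self_eq_norm_sq]
    rw [heq]; exact this
  have hconst : ∀ t s : ℝ, E t = E s := by
    intro t s
    have : ∀ u v : ℝ, u ≤ v → E u = E v := by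
      intro u v huv
      have := is_const_of_deriv_eq_zero (f := E)
        (fun x => (hEderiv x).differentiableAt) (fun x => (hEderiv x).deriv) u v
      exact this
    rcases le_total t s with h | h
    · exact this t s h
    · exact (this s t h).symm
  refine ⟨fun t s => hconst t s, fun t => ?_⟩
  have h1 : ‖Φ t‖ ^ 2 ≤ E t := le_add_of_nonneg_right (hBpos _)
  calc ‖Φ t‖ ^ 2 ≤ E t := h1
  _ = E 0 := hconst t 0
  _ = _ := rfl
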